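/- Set w_{λ/μ} := w_μ ∘ w_λ^{-1} ∈ S_n. Then for all j ∈ ℤ one has f_{λ/μ}(j) ≡ w_{λ/μ}^{-1}(j) (mod n), i.e. the reduction of f_{λ/μ} modulo n equals the permutation w_{λ/μ}^{-1}. -/

import Mathlib

/-- The height `λ̄_a` of the `a`-th column (counted from the right) of the
partition `f = (f 1 ≥ ⋯ ≥ f k)` inside the `k × (n-k)` rectangle. -/
def colHeight (n k : ℕ) (f : ℕ → ℕ) (a : ℕ) : ℕ :=
  ((Finset.Icc 1 k).filter (fun i => n - k - a + 1 ≤ f i)).card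

/-- `b_i = n - k - μ_i + i`. -/
def bvec (n k : ℕ) (m : ℕ → ℕ) (i : ℕ) : ℕ := n - k - m i + i

/-- The short label `J(a,i) = {min (a+j-1) (b_j) : j = 1, …, i}`. -/
def shortLabel (n k : ℕ) (m : ℕ → ℕ) (a i : ℕ) : Finset ℕ :=
  (Finset.Icc 1 i).image (fun j => min (a + j - 1) (bvec n k m j))

/-- The label `I'(a,i) = J(a,i) ∪ {b_{i+1}, …, b_k}`. -/
def fullLabel (n k : ℕ) (m : ℕ → ℕ) (a i : ℕ) : Finset ℕ :=
  shortLabel n k m a i ∪ (Finset.Icc (i + 1) k).image (bvec n k m)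

/-- `I_μ = {b_1, …, b_k}`. -/
def Imu (n k : ℕ) (m : ℕ → ℕ) : Finset ℕ := (Finset.Icc 1 k).image (bvec n k m)

/-- The box `(a,i)` belongs to the skew diagram `λ/μ`. -/
def InSkew (n k : ℕ) (l m : ℕ → ℕ) (a i : ℕ) : Prop :=
  1 ≤ a ∧ a ≤ n - k ∧ 1 ≤ i ∧ i ≤ k ∧ colHeight n k m a < i ∧ i ≤ colHeight n k l a

/-- The box `(a,i)` belongs to the boundary ribbon `R(λ/μ)`. -/
def InRibbon (n k : ℕ) (l m : ℕ → ℕ) (a i : ℕ) : Prop :=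
  InSkew n k l m a i ∧ (a = 1 ∨ colHeight n k l (a - 1) ≤ i)

/-- The defining specification of the map `f_{λ/μ} : ℤ → ℤ`:
`f(a + μ̄_a) = a + λ̄_a`, `f(b_i) = (n - k - λ_i + i) + n`, and `n`-periodicity. -/
def IsSkewBAF (n k : ℕ) (l m : ℕ → ℕ) (f : ℤ → ℤ) : Prop :=
  (∀ a : ℕ, 1 ≤ a → a ≤ n - k →
    f ((a + colHeight n k m a : ℕ) : ℤ) = ((a + colHeight n k l a : ℕ) : ℤ)) ∧
  (∀ i : ℕ, 1 ≤ i → i ≤ k →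
    f ((bvec n k m i : ℕ) : ℤ) = ((n - k - l i + i : ℕ) : ℤ) + (n : ℤ)) ∧
  (∀ j : ℤ, f (j + (n : ℤ)) = f j + (n : ℤ))

/-- `W : ℤ → ℤ` is the extension to `ℤ` of the `k`-Grassmannian permutation `w_λ`
attached to the partition `l`, i.e. `W i = n - k - λ_i + i` for `1 ≤ i ≤ k`,
`W (k + a) = a + λ̄_a` for `1 ≤ a ≤ n - k`, and `W (j + n) = W j + n`. -/
def ExtGrassPerm (n k : ℕ) (l : ℕ → ℕ) (W : ℤ → ℤ) : Prop :=
  (∀ i : ℕ, 1 ≤ i → i ≤ k → W (i : ℤ) = ((n - k - l i + i : ℕ) : ℤ)) ∧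
  (∀ a : ℕ, 1 ≤ a → a ≤ n - k →
    W ((k + a : ℕ) : ℤ) = ((a + colHeight n k l a : ℕ) : ℤ)) ∧
  (∀ j : ℤ, W (j + (n : ℤ)) = W j + (n : ℤ))


private lemma shiftn (n : ℕ) (g : ℤ → ℤ) (hg : ∀ j, g (j + (n : ℤ)) = g j + (n : ℤ)) :
    ∀ (q : ℤ) (j : ℤ), g (j + (n : ℤ) * q) = g j + (n : ℤ) * q := by
  intro q
  induction q using Int.induction_on with
  | zero => simp
  | succ i ih =>
    intro j
    have h1 : j + (n : ℤ) * (i + 1) = (j + (n : ℤ) * i) + (n : ℤ) := by ring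
    rw [h1, hg, ih]; ring
  | pred i ih =>
    intro j
    have h2 := hg (j + (n : ℤ) * (-i - 1))
    have h1 : (j + (n : ℤ) * (-i - 1)) + (n : ℤ) = j + (n : ℤ) * (-i) := by ring
    rw [h1, ih] at h2
    linarith

theorem stmt10 (n k : ℕ) (l m : ℕ → ℕ)
    (hk : 0 < k) (hkn : k < n)
    (hlmono : ∀ i j, 1 ≤ i → i ≤ j → j ≤ k → l j ≤ l i)
    (hl1 : l 1 ≤ n - k)
    (hmmono : ∀ i j, 1 ≤ i → i ≤ j → j ≤ k → m j ≤ m i)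
    (hml : ∀ i, 1 ≤ i → i ≤ k → m i ≤ l i)
    (f : ℤ → ℤ) (hf : IsSkewBAF n k l m f)
    (Wl Wm Wminv : ℤ → ℤ)
    (hWl : ExtGrassPerm n k l Wl) (hWm : ExtGrassPerm n k m Wm)
    (hinv1 : Function.LeftInverse Wminv Wm)
    (hinv2 : Function.RightInverse Wminv Wm) :
    ∀ j : ℤ, f j ≡ Wl (Wminv j) [ZMOD (n : ℤ)] := by
  obtain ⟨hf1, hf2, hf3⟩ := hf
  obtain ⟨hWl1, hWl2, hWl3⟩ := hWl
  obtain ⟨hWm1, hWm2, hWm3⟩ := hWm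
  have hn0 : (0 : ℤ) < (n : ℤ) := by exact_mod_cast hk.trans hkn
  have key : ∀ t : ℤ, f (Wm t) ≡ Wl t [ZMOD (n : ℤ)] := by
    intro t
    set q : ℤ := (t - 1) / (n : ℤ) with hq
    set r : ℤ := (t - 1) % (n : ℤ) with hr
    have hdiv := Int.mul_ediv_add_emod (t - 1) (n : ℤ)
    have hdec : t = (1 + r) + (n : ℤ) * q := by rw [hq, hr]; linarith
    have hr0 : 0 ≤ r := Int.emod_nonneg _ (by positivity)
    have hrn : r < (n : ℤ) := Int.emod_lt_of_pos _ hn0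
    have base : f (Wm (1 + r)) ≡ Wl (1 + r) [ZMOD (n : ℤ)] := by
      set i : ℕ := (1 + r).toNat with hi
      have hicast : ((i : ℕ) : ℤ) = 1 + r := Int.toNat_of_nonneg (by linarith)
      have hi1 : 1 ≤ i := by omega
      have hin : i ≤ n := by
        have : ((i : ℕ) : ℤ) ≤ (n : ℤ) := by rw [hicast]; linarith
        exact_mod_cast this
      by_cases hik : i ≤ k
      · rw [← hicast, hWm1 i hi1 hik]
        have hb : ((n - k - m i + i : ℕ) : ℤ) = ((bvec n k m i : ℕ) : ℤ) := rfl
        rw [hb, hf2 i hi1 hik, hWl1 i hi1 hik]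
        exact Int.ModEq.symm (Int.modEq_iff_dvd.mpr ⟨1, by ring⟩)
      · set a : ℕ := i - k with ha
        have ha1 : 1 ≤ a := by omega
        have hank : a ≤ n - k := by omega
        have hia : i = k + a := by omega
        rw [← hicast, hia, hWm2 a ha1 hank, hf1 a ha1 hank, hWl2 a ha1 hank]
    rw [hdec, shiftn n Wm hWm3 q (1 + r), shiftn n f hf3 q _, shiftn n Wl hWl3 q _]
    exact base.add_right _
  intro j
  have h := key (Wminv j)
  rwa [hinv2 j] at h
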